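/- Let $D$ be a finite-dimensional division algebra over $\mathbb{Q}_p$ with ring of integers (maximal order) $A$ and uniformizer $a$, and suppose the inner automorphism $x \mapsto axa^{-1}$ induces a nontrivial automorphism of the residue field of $A$. Then there exists $x \in A^\times$ such that $y = axa^{-1}x^{-1}$ has residue class $\neq 1$ in the residue field; in particular $y \in A^\times$ is a commutator in $D^\times$ (hence trivial in $K_1(D) = (D^\times)^{\mathrm{ab}}$) but nontrivial in $(A^\times)^{\mathrm{ab}}$, so the canonical map $K_1(A) \to K_1(D)$ is not injective. -/

import Mathlib

open Function

/-- Kato's counterexample: Let `D` be a finite-dimensional division algebra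
over `ℚ_p`, `A ⊆ D` its ring of integers (a noncommutative local ring, every element with
nonzero residue being a unit), `a ∈ A` a prime element (`a ≠ 0`) with residue field
`k = A/aA` (given by a surjection `π : A → k` with kernel `aA`), such that conjugation by
`a` preserves `A` and induces a nontrivial automorphism of the residue field. Then there
is `x ∈ A^×` such that `y = a x a⁻¹ x⁻¹` has residue `≠ 1`; `y` is a unit of `A`, a
commutator in `D^×` (hence trivial in `K₁(D) = (D^×)^{ab}`) but nontrivial in
`K₁(A) = (A^×)^{ab}`; in particular the canonical map `K₁(A) → K₁(D)` is not
injective. -/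
theorem stmt_14 (p : ℕ) [Fact p.Prime]
    (D : Type) [DivisionRing D] [Algebra ℚ_[p] D] [FiniteDimensional ℚ_[p] D]
    (A : Subring D) (a : A) (ha : (a : D) ≠ 0)
    (hconj : ∀ r : A, (a : D) * r * (a : D)⁻¹ ∈ A)
    (k : Type) [Field k] (π : A →+* k) (hπ : Surjective π)
    (hker : ∀ r : A, π r = 0 ↔ ∃ s : A, (r : D) = (a : D) * s)
    (hlocal : ∀ r : A, π r ≠ 0 → IsUnit r)
    (hnontriv : ∃ u : A, π ⟨(a : D) * u * (a : D)⁻¹, hconj u⟩ ≠ π u) :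
    (∃ (x y : Aˣ),
      ((y : A) : D) = (a : D) * ((x : A) : D) * (a : D)⁻¹ * (((x : A) : D))⁻¹ ∧
      π (y : A) ≠ 1 ∧
      -- `y` is trivial in `K₁(D) = (D^×)^{ab}` …
      Abelianization.of (Units.map A.subtype.toMonoidHom y) = 1 ∧
      -- … but nontrivial in `K₁(A) = (A^×)^{ab}`
      Abelianization.of y ≠ 1) ∧
    ¬ Injective (Abelianization.map (Units.map A.subtype.toMonoidHom) :
        Abelianization Aˣ → Abelianization Dˣ) := by
  -- Step 1: find a unit x with π(axa⁻¹) ≠ π x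
  have haa : (a : D) * (a : D)⁻¹ = 1 := mul_inv_cancel₀ ha
  have key : ∃ x : A, IsUnit x ∧ π ⟨(a : D) * x * (a : D)⁻¹, hconj x⟩ ≠ π x := by
    obtain ⟨u, hu⟩ := hnontriv
    by_cases h0 : π u = 0
    · refine ⟨u + 1, hlocal _ ?_, ?_⟩
      · rw [map_add, h0, map_one, zero_add]; exact one_ne_zero
      · have hval : (⟨(a : D) * ↑(u + 1) * (a : D)⁻¹, hconj (u + 1)⟩ : A)
            = ⟨(a : D) * u * (a : D)⁻¹, hconj u⟩ + 1 := by
          apply Subtype.ext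
          push_cast
          rw [mul_add, add_mul, mul_one, haa]
        rw [hval, map_add, map_add, map_one]
        exact fun h => hu (by linear_combination (norm := ring_nf) h)
    · exact ⟨u, hlocal _ h0, hu⟩
  obtain ⟨x, hx, hne⟩ := key
  obtain ⟨xu, rfl⟩ := hx
  set x : A := (xu : A) with hxdef
  set w : A := ((xu⁻¹ : Aˣ) : A) with hwdef
  have hxw : x * w = 1 := xu.mul_inv
  have hwx : w * x = 1 := xu.inv_mul
  have hxwD : (x : D) * (w : D) = 1 := by rw [← Subring.coe_mul, hxw]; rfl
  have hwxD : (w : D) * (x : D) = 1 := by rw [← Subring.coe_mul, hwx]; rfl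
  -- the conjugates
  set z : A := (⟨(a : D) * x * (a : D)⁻¹, hconj x⟩ : A) with hzdef
  set zi : A := (⟨(a : D) * w * (a : D)⁻¹, hconj w⟩ : A) with hzidef
  have hainv : (a : D)⁻¹ * (a : D) = 1 := inv_mul_cancel₀ ha
  have hz1 : z * zi = 1 := by
    apply Subtype.ext
    show ((a : D) * x * (a : D)⁻¹) * ((a : D) * w * (a : D)⁻¹) = 1
    simp only [mul_assoc]
    rw [← mul_assoc ((a : D))⁻¹, hainv, one_mul, ← mul_assoc (x : D), hxwD, one_mul, haa]
  have hz2 : zi * z = 1 := by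
    apply Subtype.ext
    show ((a : D) * w * (a : D)⁻¹) * ((a : D) * x * (a : D)⁻¹) = 1
    simp only [mul_assoc]
    rw [← mul_assoc ((a : D))⁻¹, hainv, one_mul, ← mul_assoc (w : D), hwxD, one_mul, haa]
  set zu : Aˣ := ⟨z, zi, hz1, hz2⟩ with hzudef
  set y : Aˣ := zu * xu⁻¹ with hydef
  have hyval : (y : A) = z * w := rfl
  -- π x is a unit
  have hπx : π x ≠ 0 := by
    intro h
    have : π x * π w = 1 := by rw [← map_mul, hxw, map_one]
    rw [h, zero_mul] at this; exact zero_ne_one this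
  -- π y ≠ 1
  have hπy : π (y : A) ≠ 1 := by
    rw [hyval, map_mul]
    intro h
    have hxw1 : π x * π w = 1 := by rw [← map_mul, hxw, map_one]
    have hπw : π w ≠ 0 := by
      intro h0; rw [h0, mul_zero] at hxw1; exact zero_ne_one hxw1
    apply hne
    have : π z * π w = π x * π w := by rw [h, hxw1]
    exact mul_right_cancel₀ hπw this
  -- D-value equation
  have hinvD : ((x : D))⁻¹ = (w : D) := inv_eq_of_mul_eq_one_right hxwD
  have hDval : ((y : A) : D) = (a : D) * (x : D) * (a : D)⁻¹ * ((x : D))⁻¹ := by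
    rw [hyval, hinvD, Subring.coe_mul]
  -- trivial in Abelianization Dˣ
  set aD : Dˣ := Units.mk0 (a : D) ha with haDdef
  set xD : Dˣ := Units.map A.subtype.toMonoidHom xu with hxDdef
  have hmapy : Units.map A.subtype.toMonoidHom y = aD * xD * aD⁻¹ * xD⁻¹ := by
    apply Units.ext
    show ((y : A) : D) = ((aD * xD * aD⁻¹ * xD⁻¹ : Dˣ) : D)
    rw [hDval]
    simp only [Units.val_mul, Units.val_inv_eq_inv_val]
    rfl
  have htrivD : Abelianization.of (Units.map A.subtype.toMonoidHom y) = 1 := by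
    open scoped commutatorElement in
    have hc : aD * xD * aD⁻¹ * xD⁻¹ = ⁅aD, xD⁆ := (commutatorElement_def _ _).symm
    rw [hmapy, hc, map_commutatorElement]
    exact commutatorElement_eq_one_iff_commute.mpr (Commute.all _ _)
  -- nontrivial in Abelianization Aˣ
  have hnontrivA : Abelianization.of y ≠ 1 := by
    intro h
    have := congrArg (Abelianization.lift (Units.map π.toMonoidHom)) h
    rw [Abelianization.lift_apply_of, map_one] at this
    apply hπy
    have := congrArg (Units.val) this
    rw [Units.coe_map] at this
    simpa using this
  refine ⟨⟨xu, y, hDval, hπy, htrivD, hnontrivA⟩, ?_⟩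
  intro hinj
  apply hnontrivA
  apply hinj
  rw [map_one, Abelianization.map_of, htrivD]
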